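/- Let a ∈ (0,1) and let β₁, β₂ ∈ [−a/√(1−a²), a/√(1−a²)]. If |F₂(β₁) − F₂(β₂)| = π and cos(F₂(β₁)) < 0, then |β₁| > |β₂|, and consequently t₂(β₁) < t₂(β₂). -/

import Mathlib

open Real Set

/-- The argument function `F₂(β)` in the long-time case. -/
noncomputable def F₂ (a β : ℝ) : ℝ :=
  β / Real.sqrt (1 + β^2) * (Real.pi - Real.arcsin (Real.sqrt ((1 - a^2) * (1 + β^2)))) +
    Real.arcsin (β * Real.sqrt (1 - a^2) / a)

/-- The candidate sub-Riemannian distance `t₂(β)` in the long-time case. -/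
noncomputable def t₂ (a β : ℝ) : ℝ :=
  2 / Real.sqrt (1 + β^2) * (Real.pi - Real.arcsin (Real.sqrt ((1 - a^2) * (1 + β^2))))

set_option maxHeartbeats 1000000 in
lemma F2_deriv (a β : ℝ) (ha : a ∈ Set.Ioo (0:ℝ) 1)
    (hβ : β^2 < a^2/(1-a^2)) :
    HasDerivAt (F₂ a)
      ((Real.pi - Real.arcsin (Real.sqrt ((1 - a^2) * (1 + β^2)))) /
          ((1 + β^2) * Real.sqrt (1 + β^2)) +
        Real.sqrt (1 - a^2) / ((1 + β^2) * Real.sqrt (a^2 - (1 - a^2) * β^2))) β := by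
  obtain ⟨ha0, ha1⟩ := ha
  have hq : (0:ℝ) < 1 - a^2 := by nlinarith
  have hu : (0:ℝ) < 1 + β^2 := by positivity
  have hD : (0:ℝ) < a^2 - (1-a^2)*β^2 := by
    have := hβ
    rw [lt_div_iff₀ hq] at this
    nlinarith
  set P := Real.sqrt (1 + β^2) with hPdef
  have hP : 0 < P := Real.sqrt_pos.mpr hu
  have hP2 : P^2 = 1 + β^2 := Real.sq_sqrt hu.le
  set Q := Real.sqrt (1 - a^2) with hQdef
  have hQ : 0 < Q := Real.sqrt_pos.mpr hq
  have hQ2 : Q^2 = 1 - a^2 := Real.sq_sqrt hq.le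
  set S := Real.sqrt ((1 - a^2) * (1 + β^2)) with hSdef
  have hSQ : (0:ℝ) < (1-a^2)*(1+β^2) := by positivity
  have hS : 0 < S := Real.sqrt_pos.mpr hSQ
  have hS2 : S^2 = (1-a^2)*(1+β^2) := Real.sq_sqrt hSQ.le
  have hSlt : S < 1 := by
    have h := Real.sqrt_lt_sqrt hSQ.le (show (1-a^2)*(1+β^2) < 1 by nlinarith)
    simpa [hSdef] using h
  set D := Real.sqrt (a^2 - (1-a^2)*β^2) with hDdef
  have hDpos : 0 < D := Real.sqrt_pos.mpr hD
  have hD2 : D^2 = a^2 - (1-a^2)*β^2 := Real.sq_sqrt hD.le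
  -- derivative of 1 + x^2
  have h0 : HasDerivAt (fun x : ℝ => 1 + x^2) (2*β) β := by
    simpa using ((hasDerivAt_pow 2 β).const_add 1)
  -- derivative of sqrt(1+x^2)
  have hsq : HasDerivAt (fun x : ℝ => Real.sqrt (1 + x^2)) (2*β / (2*P)) β :=
    h0.sqrt hu.ne'
  have e1 : Real.sqrt (1 - S^2) = D := by
    rw [hDdef]; congr 1; rw [hS2]; ring
  have e2 : Real.sqrt (1 - (β*Q/a)^2) = D / a := by
    have h3 : 1 - (β*Q/a)^2 = (a^2 - (1-a^2)*β^2) / a^2 := by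
      rw [div_pow, mul_pow, hQ2]; field_simp
    rw [h3, Real.sqrt_div hD.le, Real.sqrt_sq ha0.le]
  have e3 : S = Q * P := by
    rw [hSdef, hQdef, hPdef, ← Real.sqrt_mul hq.le]
  -- derivative of g = x / sqrt(1+x^2)
  have hg : HasDerivAt (fun x : ℝ => x / Real.sqrt (1 + x^2))
      (1 / ((1 + β^2) * P)) β := by
    have := (hasDerivAt_id β).div hsq hP.ne'
    refine this.congr_deriv (Eq.symm ?_)
    simp only [id, ← hPdef]
    field_simp
    linear_combination (-β^2) * hP2
  -- derivative of A = arcsin (sqrt ((1-a^2)(1+x^2)))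
  have hA : HasDerivAt (fun x : ℝ => Real.arcsin (Real.sqrt ((1-a^2)*(1+x^2))))
      (Q * β / (D * P)) β := by
    have hinner : HasDerivAt (fun x : ℝ => (1-a^2)*(1+x^2)) ((1-a^2)*(2*β)) β :=
      h0.const_mul _
    have hSder : HasDerivAt (fun x : ℝ => Real.sqrt ((1-a^2)*(1+x^2)))
        ((1-a^2)*(2*β) / (2*S)) β := hinner.sqrt hSQ.ne'
    have := (Real.hasDerivAt_arcsin (by linarith) hSlt.ne).comp β hSder
    refine this.congr_deriv (Eq.symm ?_)
    rw [e1, e3, ← hQ2]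
    field_simp
  -- derivative of B = arcsin (x * Q / a)
  have hB : HasDerivAt (fun x : ℝ => Real.arcsin (x * Q / a)) (Q / D) β := by
    have hBin : HasDerivAt (fun x : ℝ => x * Q / a) (Q/a) β := by
      simpa using ((hasDerivAt_id β).mul_const Q).div_const a
    have hBlt : (β * Q / a)^2 < 1 := by
      rw [div_pow, mul_pow, hQ2, div_lt_one (by positivity)]
      nlinarith
    have h1 : β * Q / a ≠ -1 := by nlinarith [sq_nonneg (β*Q/a + 1)]
    have h2 : β * Q / a ≠ 1 := by nlinarith [sq_nonneg (β*Q/a - 1)]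
    have := (Real.hasDerivAt_arcsin h1 h2).comp β hBin
    refine this.congr_deriv (Eq.symm ?_)
    rw [e2]
    field_simp
  have htot := (hg.mul ((hasDerivAt_const β Real.pi).sub hA)).add hB
  have hF : F₂ a = fun x : ℝ => x / Real.sqrt (1 + x^2) *
      (Real.pi - Real.arcsin (Real.sqrt ((1 - a^2) * (1 + x^2)))) +
      Real.arcsin (x * Q / a) := by
    funext x; rw [F₂, hQdef, mul_comm x (Real.sqrt (1-a^2))]
  rw [hF]
  refine htot.congr_deriv (Eq.symm ?_)
  simp only [Pi.sub_apply, ← hPdef, ← hSdef]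
  rw [e3]
  field_simp
  linear_combination (-(Q*β^2)) * hP2

lemma F2_cont (a : ℝ) : Continuous (F₂ a) := by
  have hc1 : Continuous fun x : ℝ => Real.sqrt (1 + x^2) :=
    Real.continuous_sqrt.comp (by continuity)
  have hne : ∀ x : ℝ, Real.sqrt (1 + x^2) ≠ 0 :=
    fun x => (Real.sqrt_pos.mpr (by positivity)).ne'
  exact ((continuous_id.div hc1 hne).mul
    (continuous_const.sub (Real.continuous_arcsin.comp
      (Real.continuous_sqrt.comp (by continuity))))).add
    (Real.continuous_arcsin.comp (by continuity))

lemma F2_odd (a β : ℝ) : F₂ a (-β) = -(F₂ a β) := by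
  rw [F₂, F₂, neg_sq, show -β * Real.sqrt (1-a^2)/a = -(β * Real.sqrt (1-a^2)/a) by ring,
    Real.arcsin_neg]
  ring

lemma F2_zero (a : ℝ) : F₂ a 0 = 0 := by
  simp [F₂]

lemma c_sq (a : ℝ) (ha : a ∈ Set.Ioo (0:ℝ) 1) :
    (a / Real.sqrt (1 - a^2))^2 = a^2 / (1 - a^2) := by
  have hq : (0:ℝ) < 1 - a^2 := by nlinarith [ha.1, ha.2]
  rw [div_pow, Real.sq_sqrt hq.le]

lemma F2_mono (a : ℝ) (ha : a ∈ Set.Ioo (0:ℝ) 1) :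
    StrictMonoOn (F₂ a) (Set.Icc (-(a / Real.sqrt (1 - a^2))) (a / Real.sqrt (1 - a^2))) := by
  have hq : (0:ℝ) < 1 - a^2 := by nlinarith [ha.1, ha.2]
  apply strictMonoOn_of_deriv_pos (convex_Icc _ _) (F2_cont a).continuousOn
  intro x hx
  rw [interior_Icc, Set.mem_Ioo] at hx
  have hx2 : x^2 < a^2/(1-a^2) := by
    rw [← c_sq a ha]
    have h1 : |x| < a / Real.sqrt (1 - a^2) := abs_lt.mpr hx
    calc x^2 = |x|^2 := (sq_abs x).symm
    _ < _ := by
      apply pow_lt_pow_left₀ h1 (abs_nonneg x)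
      norm_num
  rw [(F2_deriv a x ha hx2).deriv]
  have hu : (0:ℝ) < 1 + x^2 := by positivity
  have hD : (0:ℝ) < a^2 - (1-a^2)*x^2 := by
    rw [lt_div_iff₀ hq] at hx2; nlinarith
  have harc := Real.arcsin_le_pi_div_two (Real.sqrt ((1 - a^2) * (1 + x^2)))
  have hpi := Real.pi_pos
  apply add_pos
  · apply div_pos (by linarith) (by positivity)
  · apply div_pos (Real.sqrt_pos.mpr hq) (mul_pos hu (Real.sqrt_pos.mpr hD))

lemma F2_at_c (a : ℝ) (ha : a ∈ Set.Ioo (0:ℝ) 1) :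
    F₂ a (a / Real.sqrt (1 - a^2)) = (a + 1) * Real.pi / 2 := by
  obtain ⟨ha0, ha1⟩ := ha
  have hq : (0:ℝ) < 1 - a^2 := by nlinarith
  set Q := Real.sqrt (1 - a^2) with hQdef
  have hQ : 0 < Q := Real.sqrt_pos.mpr hq
  have hQ2 : Q^2 = 1 - a^2 := Real.sq_sqrt hq.le
  have h1 : 1 + (a/Q)^2 = 1/Q^2 := by field_simp; linarith
  have h2 : Real.sqrt (1 + (a/Q)^2) = 1/Q := by
    rw [h1, one_div, Real.sqrt_inv, Real.sqrt_sq hQ.le]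
    exact (one_div Q).symm
  have h3 : (1 - a^2) * (1 + (a/Q)^2) = 1 := by
    rw [h1, ← hQ2]; field_simp
  have h4 : a / Q * Q / a = 1 := by field_simp
  rw [F₂, h2, h3, h4, Real.sqrt_one, Real.arcsin_one]
  have : a / Q / (1 / Q) = a := by field_simp
  rw [this]
  ring

lemma F2_bound (a β : ℝ) (ha : a ∈ Set.Ioo (0:ℝ) 1)
    (hβ : β ∈ Set.Icc (-(a / Real.sqrt (1 - a^2))) (a / Real.sqrt (1 - a^2))) :
    |F₂ a β| < Real.pi := by
  have hq : (0:ℝ) < 1 - a^2 := by nlinarith [ha.1, ha.2]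
  have hc : 0 < a / Real.sqrt (1 - a^2) := div_pos ha.1 (Real.sqrt_pos.mpr hq)
  have hmem_c : a / Real.sqrt (1 - a^2) ∈
      Set.Icc (-(a / Real.sqrt (1 - a^2))) (a / Real.sqrt (1 - a^2)) :=
    ⟨by linarith, le_refl _⟩
  have hmem_nc : -(a / Real.sqrt (1 - a^2)) ∈
      Set.Icc (-(a / Real.sqrt (1 - a^2))) (a / Real.sqrt (1 - a^2)) :=
    ⟨le_refl _, by linarith⟩
  have hub : F₂ a β ≤ (a + 1) * Real.pi / 2 := by
    rw [← F2_at_c a ha]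
    exact (F2_mono a ha).monotoneOn hβ hmem_c hβ.2
  have hlb : -((a + 1) * Real.pi / 2) ≤ F₂ a β := by
    rw [← F2_at_c a ha, ← F2_odd]
    exact (F2_mono a ha).monotoneOn hmem_nc hβ hβ.1
  have hpi := Real.pi_pos
  rw [abs_lt]
  constructor <;> nlinarith [ha.1, ha.2]

lemma abs_F2 (a β : ℝ) (ha : a ∈ Set.Ioo (0:ℝ) 1)
    (hβ : β ∈ Set.Icc (-(a / Real.sqrt (1 - a^2))) (a / Real.sqrt (1 - a^2))) :
    |F₂ a β| = F₂ a |β| := by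
  have habs : |β| ∈ Set.Icc (-(a / Real.sqrt (1 - a^2))) (a / Real.sqrt (1 - a^2)) := by
    constructor
    · calc -(a / Real.sqrt (1 - a^2)) ≤ 0 := by
            have := hβ.1.trans hβ.2; linarith
      _ ≤ |β| := abs_nonneg β
    · rw [abs_le]; exact ⟨hβ.1, hβ.2⟩
  have h0 : (0:ℝ) ∈ Set.Icc (-(a / Real.sqrt (1 - a^2))) (a / Real.sqrt (1 - a^2)) := by
    constructor
    · have := hβ.1.trans hβ.2; linarith
    · have := hβ.1.trans hβ.2; linarith
  have hnn : 0 ≤ F₂ a |β| := by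
    rw [← F2_zero a]
    exact (F2_mono a ha).monotoneOn h0 habs (abs_nonneg β)
  rcases le_or_gt 0 β with h | h
  · rw [abs_of_nonneg h] at *
    rw [abs_of_nonneg hnn]
  · rw [abs_of_neg h] at *
    rw [F2_odd] at hnn ⊢
    rw [abs_of_nonpos (by linarith)]

lemma t2_anti (a x y : ℝ) (ha : a ∈ Set.Ioo (0:ℝ) 1)
    (hxy : x^2 < y^2) (hy : y^2 ≤ a^2/(1-a^2)) : t₂ a y < t₂ a x := by
  have hq : (0:ℝ) < 1 - a^2 := by nlinarith [ha.1, ha.2]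
  have hux : (0:ℝ) < 1 + x^2 := by positivity
  have huy : (0:ℝ) < 1 + y^2 := by positivity
  have hs : Real.sqrt (1 + x^2) < Real.sqrt (1 + y^2) :=
    Real.sqrt_lt_sqrt hux.le (by linarith)
  have hsx : 0 < Real.sqrt (1 + x^2) := Real.sqrt_pos.mpr hux
  have f1 : 2 / Real.sqrt (1 + y^2) < 2 / Real.sqrt (1 + x^2) :=
    div_lt_div_of_pos_left (by norm_num) hsx hs
  have f2 : Real.pi - Real.arcsin (Real.sqrt ((1 - a^2) * (1 + y^2))) ≤
      Real.pi - Real.arcsin (Real.sqrt ((1 - a^2) * (1 + x^2))) := by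
    have := Real.monotone_arcsin (Real.sqrt_le_sqrt
      (show (1 - a^2) * (1 + x^2) ≤ (1 - a^2) * (1 + y^2) by nlinarith))
    linarith
  have hposy : 0 < Real.pi - Real.arcsin (Real.sqrt ((1 - a^2) * (1 + y^2))) := by
    have := Real.arcsin_le_pi_div_two (Real.sqrt ((1 - a^2) * (1 + y^2)))
    have := Real.pi_pos
    linarith
  rw [t₂, t₂]
  exact mul_lt_mul f1 f2 hposy (by positivity)

/-- If `|F₂(β₁) − F₂(β₂)| = π` and `cos(F₂(β₁)) < 0`, then `|β₁| > |β₂|`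
and `t₂(β₁) < t₂(β₂)`. -/
theorem beta_comparison_long (a β₁ β₂ : ℝ) (ha : a ∈ Set.Ioo (0:ℝ) 1)
    (hβ₁ : β₁ ∈ Set.Icc (-(a / Real.sqrt (1 - a^2))) (a / Real.sqrt (1 - a^2)))
    (hβ₂ : β₂ ∈ Set.Icc (-(a / Real.sqrt (1 - a^2))) (a / Real.sqrt (1 - a^2)))
    (hdiff : |F₂ a β₁ - F₂ a β₂| = Real.pi) (hcos : Real.cos (F₂ a β₁) < 0) :
    |β₁| > |β₂| ∧ t₂ a β₁ < t₂ a β₂ := by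
  have hpi := Real.pi_pos
  set x := F₂ a β₁ with hxd
  set y := F₂ a β₂ with hyd
  have hx : |x| < Real.pi := F2_bound a β₁ ha hβ₁
  have hy : |y| < Real.pi := F2_bound a β₂ ha hβ₂
  have hxbig : Real.pi / 2 < |x| := by
    by_contra h
    push_neg at h
    have : 0 ≤ Real.cos x := Real.cos_nonneg_of_mem_Icc
      ⟨by rw [abs_le] at h; linarith [h.1], by rw [abs_le] at h; exact h.2⟩
    linarith
  have hysmall : |y| < Real.pi / 2 := by
    rcases abs_eq hpi.le |>.mp hdiff with h | h
    · -- x - y = π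
      rcases abs_lt.mp hx with ⟨hx1, hx2⟩
      rcases lt_abs.mp hxbig with h2 | h2
      · rw [abs_lt]; constructor <;> linarith
      · exfalso
        rcases abs_lt.mp hy with ⟨hy1, hy2⟩
        linarith
    · -- x - y = -π
      rcases abs_lt.mp hx with ⟨hx1, hx2⟩
      rcases lt_abs.mp hxbig with h2 | h2
      · exfalso
        rcases abs_lt.mp hy with ⟨hy1, hy2⟩
        linarith
      · rw [abs_lt]; constructor <;> linarith
  have hmain : |β₂| < |β₁| := by
    by_contra h
    push_neg at h
    have habs1 : |β₁| ∈ Set.Icc (-(a / Real.sqrt (1 - a^2))) (a / Real.sqrt (1 - a^2)) := by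
      constructor
      · calc -(a / Real.sqrt (1 - a^2)) ≤ 0 := by have := hβ₁.1.trans hβ₁.2; linarith
        _ ≤ |β₁| := abs_nonneg β₁
      · rw [abs_le]; exact ⟨hβ₁.1, hβ₁.2⟩
    have habs2 : |β₂| ∈ Set.Icc (-(a / Real.sqrt (1 - a^2))) (a / Real.sqrt (1 - a^2)) := by
      constructor
      · calc -(a / Real.sqrt (1 - a^2)) ≤ 0 := by have := hβ₂.1.trans hβ₂.2; linarith
        _ ≤ |β₂| := abs_nonneg β₂
      · rw [abs_le]; exact ⟨hβ₂.1, hβ₂.2⟩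
    have : |x| ≤ |y| := by
      rw [hxd, hyd, abs_F2 a β₁ ha hβ₁, abs_F2 a β₂ ha hβ₂]
      exact (F2_mono a ha).monotoneOn habs1 habs2 h
    linarith
  refine ⟨hmain, ?_⟩
  apply t2_anti a β₂ β₁ ha
  · calc β₂^2 = |β₂|^2 := (sq_abs β₂).symm
    _ < |β₁|^2 := by apply pow_lt_pow_left₀ hmain (abs_nonneg β₂); norm_num
    _ = β₁^2 := sq_abs β₁
  · rw [← c_sq a ha]
    calc β₁^2 = |β₁|^2 := (sq_abs β₁).symm
    _ ≤ _ := by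
      apply pow_le_pow_left₀ (abs_nonneg β₁) _
      rw [abs_le]; exact ⟨hβ₁.1, hβ₁.2⟩
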